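/- Let V be a nonempty string over Σ_$, and let j = (position of the first occurrence of $ in V) − 1 if V contains at least one $, and j = |V| otherwise. Then the sum of the (integer) entries rtsenc(V)[1] + rtsenc(V)[2] + ⋯ + rtsenc(V)[j] is at most |V|. -/

import Mathlib

open Classical

/-- Unlabeled binary trees, representing the shapes of Cartesian trees
(Cartesian tree matching compares tree structure). -/
inductive CTree : Type where
  | leaf : CTree
  | node : CTree → CTree → CTree
  deriving DecidableEq

noncomputable section

/-- The alphabet `Σ_$`: the integer alphabet `Σ = {0,…,σ}` together with the
special symbol `$ = ⊥`, which is smaller than every symbol of `Σ`. -/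
abbrev Sig (σ : ℕ) := WithBot (Fin (σ + 1))

/-- The encoding alphabet `Σ_$ ∪ ℕ ∪ {∞}`: `$ = ⊥`, naturals, and `∞ = ⊤`. -/
abbrev Enc := WithBot (WithTop ℕ)

/-- The symbol `∞`, larger than every integer. -/
def infE : Enc := ((⊤ : WithTop ℕ) : Enc)

variable {σ : ℕ}

/-- 1-based access, defaulting to `$`. -/
def get1 (V : List (Sig σ)) (i : ℕ) : Sig σ := V.getD (i - 1) ⊥

/-- Parent distance encoding: entry at 1-based position `i`:
`∞` if `$ ≠ V[i] < V[j]` for all `j < i`; `$` if `V[i] = $`;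
otherwise `i − max{ j ∈ [1..i−1] : V[j] < V[i] }`. -/
def pdEntry (V : List (Sig σ)) (i : ℕ) : Enc :=
  if get1 V i = ⊥ then ⊥
  else if ∀ j, 1 ≤ j → j < i → get1 V i < get1 V j then infE
  else (((i - Nat.findGreatest (fun j => 1 ≤ j ∧ get1 V j < get1 V i) (i - 1) : ℕ) : WithTop ℕ) : Enc)

/-- The parent distance encoding `pd(V)`. -/
def pd (V : List (Sig σ)) : List Enc := (List.range V.length).map fun k => pdEntry V (k + 1)

/-- 0-based position of the leftmost minimum symbol. -/
def minPos (V : List (Sig σ)) : ℕ := V.findIdx fun c => V.all fun d => decide (c ≤ d)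

def ctAux : ℕ → List (Sig σ) → CTree
  | 0, _ => .leaf
  | fuel + 1, V =>
    if V.isEmpty then .leaf
    else .node (ctAux fuel (V.take (minPos V))) (ctAux fuel (V.drop (minPos V + 1)))

/-- The Cartesian tree `CT(V)`: root at the position of the smallest symbol
(ties broken towards the smallest position), recursing on both sides. -/
def ct (V : List (Sig σ)) : CTree := ctAux V.length V

/-- Cartesian tree matching: `U ≈ V` iff `CT(U) = CT(V)`. -/
def CtMatch (U V : List (Sig σ)) : Prop := ct U = ct V

/-- `k`-fold concatenation `Y^k`. -/
def listPow {α : Type*} : List α → ℕ → List α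
  | _, 0 => []
  | Y, k + 1 => Y ++ listPow Y k

/-- A string is primitive if `X = Y^k` implies `Y = X` and `k = 1`. -/
def Primitive {α : Type*} (X : List α) : Prop := ∀ Y k, X = listPow Y k → Y = X ∧ k = 1

/-- The primitive root `root(U)` of a string. -/
def proot {α : Type*} (U : List α) : List α :=
  if h : ∃ Y, Primitive Y ∧ ∃ k, 1 ≤ k ∧ U = listPow Y k then h.choose else U

/-- `V^ω[..i]`, the length-`i` prefix of the infinite self-concatenation of `V`. -/
def wpre {α : Type*} (V : List α) (i : ℕ) : List α := (listPow V i).take i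

/-- One left rotation. -/
def rotOne {α : Type*} (V : List α) : List α := V.drop 1 ++ V.take 1

/-- `rot(V,k)`, the `k`-th left rotation of `V`. -/
def rot {α : Type*} (V : List α) (k : ℕ) : List α := rotOne^[k] V

/-- Rotational parent distance encoding: `rpd(V) = pd(V·V)[|V|+1..]`. -/
def rpd (V : List (Sig σ)) : List Enc := (pd (V ++ V)).drop V.length

/-- The ω-preorder: `V ⪯ω U` iff there is `i` with `pd(V^ω[..i]) < pd(U^ω[..i])`
(lexicographically, with a proper prefix smaller), or `root(rpd V) = root(rpd U)`. -/
def omegaLe (V U : List (Sig σ)) : Prop :=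
  (∃ i : ℕ, List.Lex (· < ·) (pd (wpre V i)) (pd (wpre U i))) ∨ proot (rpd V) = proot (rpd U)

/-- `V =ω U`. -/
def omegaEq (V U : List (Sig σ)) : Prop := omegaLe V U ∧ omegaLe U V

/-- `V ≺ω U`. -/
def omegaLt (V U : List (Sig σ)) : Prop := omegaLe V U ∧ ¬ omegaEq V U

/-- Entry of the rotational Cartesian tree signature encoding at 1-based position `i`. -/
def rtsEntry (V : List (Sig σ)) (i : ℕ) : WithBot ℕ :=
  if get1 V i = ⊥ then ⊥
  else (((pd (rot V i)).count infE - ((pd (get1 V i :: rot V i)).drop 1).count infE : ℕ) : WithBot ℕ)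

/-- The rotational Cartesian tree signature encoding `rtsenc(V)`. -/
def rtsenc (V : List (Sig σ)) : List (WithBot ℕ) :=
  (List.range V.length).map fun k => rtsEntry V (k + 1)

/-- `π(V) = rtsenc(V)[1]`. -/
def piF (V : List (Sig σ)) : WithBot ℕ := (rtsenc V).getD 0 ⊥

/-- Length of the longest common prefix of two strings. -/
def lcpLen {α : Type*} [DecidableEq α] : List α → List α → ℕ
  | a :: as, b :: bs => if a = b then lcpLen as bs + 1 else 0
  | _, _ => 0

/-- `lcp∞(U,W)`: the number of occurrences of `∞` among the first `ℓ` symbols of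
`pd(U)`, where `ℓ` is the length of the longest common prefix of `pd U` and `pd W`. -/
def lcpInf (U W : List (Sig σ)) : ℕ := ((pd U).take (lcpLen (pd U) (pd W))).count infE

/-- Total length `n = |T_1 ⋯ T_d|` of all texts. -/
def totLen (Ts : List (List (Sig σ))) : ℕ := (Ts.map List.length).sum

/-- `conj_𝒯(i)` for `i ∈ [1..n]`: with `j = min{h : n_1+⋯+n_h ≥ i}`,
the rotation `rot(T_j, i − 1 − (n_1+⋯+n_{j−1}))`. -/
def conjAt : List (List (Sig σ)) → ℕ → List (Sig σ)
  | [], _ => []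
  | T :: Ts, i => if i ≤ T.length then rot T (i - 1) else conjAt Ts (i - T.length)

/-- The text `T_j` containing global position `i`. -/
def textAt : List (List (Sig σ)) → ℕ → List (Sig σ)
  | [], _ => []
  | T :: Ts, i => if i ≤ T.length then T else textAt Ts (i - T.length)

/-- `prev_𝒯(i)`. -/
def prevT (Ts : List (List (Sig σ))) (i : ℕ) : ℕ :=
  if omegaEq (conjAt Ts i) (textAt Ts i) then i - 1 + (proot (rpd (textAt Ts i))).length
  else i - 1

/-- `CA` is the conjugate array of the texts `Ts`: a permutation of `[1..n]` with
`CA[i] = j` iff `i − 1` equals the number of `k ∈ [1..n]` with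
`conj(k) ≺ω conj(j)`, or `conj(k) =ω conj(j)` and `k < j`. -/
def IsCA (Ts : List (List (Sig σ))) (CA : ℕ → ℕ) : Prop :=
  Set.BijOn CA (Set.Icc 1 (totLen Ts)) (Set.Icc 1 (totLen Ts)) ∧
  ∀ i ∈ Set.Icc 1 (totLen Ts), ∀ j ∈ Set.Icc 1 (totLen Ts),
    (CA i = j ↔ i - 1 = Set.ncard {k | k ∈ Set.Icc 1 (totLen Ts) ∧
      (omegaLt (conjAt Ts k) (conjAt Ts j) ∨ (omegaEq (conjAt Ts k) (conjAt Ts j) ∧ k < j))})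

/-- The conjugate range of `P`: positions `i ∈ [1..n]` with
`P ≈ conj(CA[i])^ω[..|P|]`. -/
def crange (Ts : List (List (Sig σ))) (CA : ℕ → ℕ) (P : List (Sig σ)) : Set ℕ :=
  {i | i ∈ Set.Icc 1 (totLen Ts) ∧ CtMatch P (wpre (conjAt Ts (CA i)) P.length)}

/-- `rank_c(V, j)`: number of occurrences of `c` in `V[..j]`. -/
def rankQ {α : Type*} [DecidableEq α] (c : α) (V : List α) (j : ℕ) : ℕ := (V.take j).count c

/-- `select_c(V, i)`: 1-based position of the `i`-th occurrence of `c` in `V`. -/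
def selectQ {α : Type*} [DecidableEq α] (c : α) (V : List α) (i : ℕ) : ℕ :=
  ((List.range V.length).findIdx fun k => (V.take (k + 1)).count c == i) + 1

end

noncomputable section S6
open List
variable {σ : ℕ}

lemma infE_ne_bot : (infE : Enc) ≠ ⊥ := by simp [infE]

lemma pdEntry_eq_infE_iff (W : List (Sig σ)) (i : ℕ) :
    pdEntry W i = infE ↔ (¬ get1 W i = ⊥ ∧ ∀ j, 1 ≤ j → j < i → get1 W i < get1 W j) := by
  unfold pdEntry
  split_ifs with h1 h2
  · simp [h1, Ne.symm infE_ne_bot]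
  · simp only [eq_self_iff_true, true_iff]; exact ⟨h1, h2⟩
  · simp only [infE, ne_eq, WithBot.coe_inj]
    simp [h1, h2]

lemma get1_eq_getD (V : List (Sig σ)) (k : ℕ) : get1 V (k+1) = V.getD k ⊥ := by simp [get1]

lemma get1_cons_succ (v : Sig σ) (W : List (Sig σ)) (k : ℕ) :
    get1 (v :: W) (k+2) = get1 W (k+1) := by simp [get1]

lemma get1_cons_one (v : Sig σ) (W : List (Sig σ)) : get1 (v :: W) 1 = v := by simp [get1]

lemma get1_append (U T : List (Sig σ)) (m : ℕ) (h1 : 1 ≤ m) (h2 : m ≤ U.length) :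
    get1 (U ++ T) m = get1 U m := by
  unfold get1
  exact List.getD_append _ _ _ _ (by omega)

lemma pdEntry_append_infE_iff (U T : List (Sig σ)) (i : ℕ) (h1 : 1 ≤ i) (h2 : i ≤ U.length) :
    (pdEntry (U ++ T) i = infE ↔ pdEntry U i = infE) := by
  rw [pdEntry_eq_infE_iff, pdEntry_eq_infE_iff]
  have hg : ∀ m, 1 ≤ m → m ≤ i → get1 (U ++ T) m = get1 U m :=
    fun m hm hmi => get1_append U T m hm (by omega)
  constructor
  · rintro ⟨ha, hb⟩
    refine ⟨by rwa [hg i h1 le_rfl] at ha, fun j hj hji => ?_⟩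
    have := hb j hj hji
    rwa [hg i h1 le_rfl, hg j hj (by omega)] at this
  · rintro ⟨ha, hb⟩
    refine ⟨by rwa [hg i h1 le_rfl], fun j hj hji => ?_⟩
    rw [hg i h1 le_rfl, hg j hj (by omega)]
    exact hb j hj hji

lemma cInf_eq_countP (W : List (Sig σ)) :
    (pd W).count infE = (List.range W.length).countP (fun k => pdEntry W (k+1) == infE) := by
  simp [pd, List.count_eq_countP, List.countP_map]; rfl

lemma rot_succ' (V : List (Sig σ)) (i : ℕ) : rot V (i+1) = rotOne (rot V i) :=
  Function.iterate_succ_apply' _ _ _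

lemma rotOne_cons (a : Sig σ) (t : List (Sig σ)) : rotOne (a :: t) = t ++ [a] := by
  simp [rotOne]

lemma rot_eq_drop_take (V : List (Sig σ)) : ∀ i, i ≤ V.length → rot V i = V.drop i ++ V.take i := by
  intro i
  induction i with
  | zero => intro _; simp [rot]
  | succ i ih =>
    intro h
    rw [rot_succ', ih (by omega)]
    have hd : V.drop i = V[i]'(by omega) :: V.drop (i+1) := List.drop_eq_getElem_cons (by omega)
    rw [hd, List.cons_append, rotOne_cons, List.take_succ,
      List.getElem?_eq_getElem (by omega : i < V.length)]
    simp [List.append_assoc]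

lemma rot_zero (V : List (Sig σ)) : rot V 0 = V := rfl

lemma rot_full (V : List (Sig σ)) : rot V V.length = V := by
  rw [rot_eq_drop_take V V.length le_rfl]; simp

lemma rot_cons (V : List (Sig σ)) (i : ℕ) (h : i < V.length) :
    rot V i = V.getD i ⊥ :: (V.drop (i+1) ++ V.take i) := by
  rw [rot_eq_drop_take V i (by omega), List.drop_eq_getElem_cons h, List.cons_append,
    List.getD_eq_getElem _ _ h]

lemma length_rot (V : List (Sig σ)) (i : ℕ) : (rot V i).length = V.length := by
  induction i with
  | zero => rfl
  | succ i ih => rw [rot_succ']; simp [rotOne]; omega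

lemma head_rot (V : List (Sig σ)) (i : ℕ) (h : i < V.length) :
    (rot V i).getD 0 ⊥ = V.getD i ⊥ := by
  rw [rot_cons V i h]; rfl

lemma cons_rot (V : List (Sig σ)) (i : ℕ) (h : i < V.length) :
    V.getD i ⊥ :: rot V (i+1) = rot V i ++ [V.getD i ⊥] := by
  rw [rot_eq_drop_take V (i+1) (by omega), rot_eq_drop_take V i (by omega),
    List.getD_eq_getElem _ _ h]
  rw [List.drop_eq_getElem_cons h]
  rw [List.take_succ, List.getElem?_eq_getElem h]
  simp only [Option.toList_some, List.cons_append, List.append_assoc]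

lemma pdEntry_last_ne_infE (U : List (Sig σ)) (hU : U ≠ []) :
    pdEntry (U ++ [U.getD 0 ⊥]) (U.length + 1) ≠ infE := by
  intro hcontra
  rw [pdEntry_eq_infE_iff] at hcontra
  obtain ⟨ha, hb⟩ := hcontra
  have hlen : 1 ≤ U.length := List.length_pos_iff.mpr hU
  have h1 := hb 1 le_rfl (by omega)
  have e1 : get1 (U ++ [U.getD 0 ⊥]) (U.length + 1) = U.getD 0 ⊥ := by
    unfold get1
    rw [Nat.add_sub_cancel, List.getD_append_right _ _ _ _ le_rfl]
    simp
  have e2 : get1 (U ++ [U.getD 0 ⊥]) 1 = U.getD 0 ⊥ := by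
    unfold get1
    rw [List.getD_append _ _ _ _ (by omega)]
  rw [e1, e2] at h1
  exact lt_irrefl _ h1

lemma count_pd_concat (U : List (Sig σ)) (x : Sig σ)
    (hx : pdEntry (U ++ [x]) (U.length + 1) ≠ infE) :
    (pd (U ++ [x])).count infE = (pd U).count infE := by
  rw [cInf_eq_countP, cInf_eq_countP]
  have hlen : (U ++ [x]).length = U.length + 1 := by simp
  rw [hlen, List.range_succ, List.countP_append]
  have h2 : List.countP (fun k => pdEntry (U ++ [x]) (k+1) == infE) [U.length] = 0 := by
    simp only [List.countP_singleton]
    simp [hx]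
  rw [h2, Nat.add_zero]
  apply List.countP_congr
  intro k hk
  rw [List.mem_range] at hk
  simp only [beq_iff_eq]
  exact pdEntry_append_infE_iff U [x] (k+1) (by omega) (by omega)

lemma count_pd_drop (W : List (Sig σ)) (hb : W.getD 0 ⊥ ≠ ⊥) :
    (pd W).count infE = ((pd W).drop 1).count infE + 1 := by
  have hne : W ≠ [] := by rintro rfl; simp at hb
  obtain ⟨m, hm⟩ : ∃ m, W.length = m + 1 := by
    cases W with
    | nil => exact absurd rfl hne
    | cons a t => exact ⟨t.length, rfl⟩
  have h1 : pdEntry W 1 = infE := by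
    rw [pdEntry_eq_infE_iff]
    exact ⟨by simpa [get1] using hb, fun j hj hji => by omega⟩
  have hpd : pd W = pdEntry W 1 :: (List.range m).map (fun k => pdEntry W (k+2)) := by
    rw [pd, hm, List.range_succ_eq_map, List.map_cons, List.map_map]
    rfl
  rw [hpd, h1]
  simp [List.count_cons]

lemma get1_cons_of_pos (v : Sig σ) (W : List (Sig σ)) (j : ℕ) (hj : 1 ≤ j) :
    get1 (v :: W) (j+1) = get1 W j := by
  cases j with
  | zero => omega
  | succ m => simp [get1]

lemma count_pd_cons_drop_le (v : Sig σ) (W : List (Sig σ)) :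
    ((pd (v :: W)).drop 1).count infE ≤ (pd W).count infE := by
  have hpd : pd (v :: W) = pdEntry (v :: W) 1 :: (List.range W.length).map (fun k => pdEntry (v :: W) (k+2)) := by
    rw [pd, List.length_cons, List.range_succ_eq_map, List.map_cons, List.map_map]
    rfl
  rw [hpd, List.drop_one, List.tail_cons, cInf_eq_countP,
    List.count_eq_countP, List.countP_map]
  apply List.countP_mono_left
  intro k hk
  simp only [Function.comp, beq_iff_eq]
  intro h
  rw [pdEntry_eq_infE_iff] at h ⊢
  obtain ⟨ha, hb⟩ := h
  rw [get1_cons_succ] at ha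
  refine ⟨ha, fun j hj hji => ?_⟩
  have := hb (j+1) (by omega) (by omega)
  rw [get1_cons_succ, get1_cons_of_pos v W j hj] at this
  exact this

lemma count_pd_zero (W : List (Sig σ)) (hb : W.getD 0 ⊥ = ⊥) :
    (pd W).count infE = 0 := by
  rw [List.count_eq_zero]
  intro hmem
  rw [pd, List.mem_map] at hmem
  obtain ⟨k, hk, hkeq⟩ := hmem
  rw [pdEntry_eq_infE_iff] at hkeq
  obtain ⟨ha, hlt⟩ := hkeq
  cases k with
  | zero => exact ha (by simpa [get1] using hb)
  | succ m =>
    have := hlt 1 le_rfl (by omega)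
    have hg : get1 W 1 = ⊥ := by simpa [get1] using hb
    rw [hg] at this
    exact not_lt_bot this

lemma rtsEntry_val (V : List (Sig σ)) (k : ℕ) (hk : k < V.length) (hb : V.getD k ⊥ ≠ ⊥) :
    WithBot.unbotD 0 (rtsEntry V (k+1)) + (pd (rot V k)).count infE
      = (pd (rot V (k+1))).count infE + 1 := by
  have hget : get1 V (k+1) = V.getD k ⊥ := get1_eq_getD V k
  have hcons : get1 V (k+1) :: rot V (k+1) = rot V k ++ [(rot V k).getD 0 ⊥] := by
    rw [hget, head_rot V k hk]
    exact cons_rot V k hk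
  have hne : rot V k ≠ [] := by
    have := length_rot V k
    intro h; rw [h] at this; simp at this; omega
  have hlast := pdEntry_last_ne_infE (rot V k) hne
  have hlenrot : (rot V k ++ [(rot V k).getD 0 ⊥]).length = (rot V k).length + 1 := by simp
  have h1 : (pd (rot V k ++ [(rot V k).getD 0 ⊥])).count infE = (pd (rot V k)).count infE :=
    count_pd_concat _ _ hlast
  have hbhead : (rot V k ++ [(rot V k).getD 0 ⊥]).getD 0 ⊥ ≠ ⊥ := by
    rw [List.getD_append _ _ _ _ (by rw [length_rot]; omega), head_rot V k hk]
    exact hb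
  have h2 := count_pd_drop _ hbhead
  have h3 : ((pd (get1 V (k+1) :: rot V (k+1))).drop 1).count infE
      = (pd (rot V k)).count infE - 1 := by
    rw [hcons, ← h1] at *
    omega
  have h4 : ((pd (get1 V (k+1) :: rot V (k+1))).drop 1).count infE
      ≤ (pd (rot V (k+1))).count infE := count_pd_cons_drop_le _ _
  have hck : 1 ≤ (pd (rot V k)).count infE := by
    rw [← h1, h2]; omega
  have hrts : rtsEntry V (k+1)
      = (((pd (rot V (k+1))).count infE - ((pd (get1 V (k+1) :: rot V (k+1))).drop 1).count infE : ℕ) : WithBot ℕ) := by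
    rw [rtsEntry, if_neg (by rw [hget]; exact hb)]
  rw [hrts]
  have : WithBot.unbotD 0 ((((pd (rot V (k+1))).count infE - ((pd (get1 V (k+1) :: rot V (k+1))).drop 1).count infE : ℕ) : WithBot ℕ))
      = (pd (rot V (k+1))).count infE - ((pd (get1 V (k+1) :: rot V (k+1))).drop 1).count infE := rfl
  rw [this, h3]
  omega
end S6

/-- For nonempty `V` over `Σ_$`, with `j` one less than the
position of the first `$` in `V` (or `j = |V|` if `V` has no `$`), the sum of the
integer entries `rtsenc(V)[1] + ⋯ + rtsenc(V)[j]` is at most `|V|`. -/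
theorem rtsenc_sum_le (σ : ℕ) (V : List (Sig σ)) (hV : V ≠ []) (j : ℕ)
    (hj : j = if (⊥ : Sig σ) ∈ V then V.idxOf (⊥ : Sig σ) else V.length) :
    ((((rtsenc V).take j).map (fun c => WithBot.unbotD 0 c)).sum) ≤ V.length := by
  have hjn : j ≤ V.length := by
    rw [hj]; split
    · exact List.idxOf_le_length
    · exact le_rfl
  have hblt : ∀ k, k < j → V.getD k ⊥ ≠ ⊥ := by
    intro k hk
    have hkn : k < V.length := by omega
    rw [List.getD_eq_getElem _ _ hkn]
    rw [hj] at hk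
    by_cases hmem : (⊥ : Sig σ) ∈ V
    · rw [if_pos hmem] at hk
      have h3 : k < List.findIdx (fun x => x == (⊥ : Sig σ)) V := by
        simpa [List.idxOf] using hk
      have := List.not_of_lt_findIdx h3
      simpa using this
    · rw [if_neg hmem] at hk
      exact fun h => hmem (h ▸ List.getElem_mem hkn)
  have hsum : (((rtsenc V).take j).map (fun c => WithBot.unbotD 0 c)).sum
      = ((List.range j).map (fun k => WithBot.unbotD 0 (rtsEntry V (k+1)))).sum := by
    rw [rtsenc, ← List.map_take, List.take_range, min_eq_left hjn, List.map_map]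
    rfl
  have tele : ∀ m, m ≤ j →
      ((List.range m).map (fun k => WithBot.unbotD 0 (rtsEntry V (k+1)))).sum + (pd V).count infE
        = (pd (rot V m)).count infE + m := by
    intro m
    induction m with
    | zero => intro _; simp [rot_zero]
    | succ m ih =>
      intro h
      rw [List.range_succ, List.map_append, List.sum_append]
      have h1 := ih (by omega)
      have h2 := rtsEntry_val V m (by omega) (hblt m (by omega))
      simp only [List.map_singleton, List.sum_singleton]
      omega
  rw [hsum]
  have htele := tele j le_rfl
  by_cases hlt : j < V.length
  · have hmem : (⊥ : Sig σ) ∈ V := by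
      by_contra hm
      rw [hj, if_neg hm] at hlt; omega
    have hidx : j = V.idxOf (⊥ : Sig σ) := by rw [hj, if_pos hmem]
    have hjv : V.getD j ⊥ = ⊥ := by
      have h2 : V[j]? = some ⊥ := by
        rw [hidx, List.getElem?_eq_getElem (List.idxOf_lt_length_iff.mpr hmem)]
        exact congrArg some (List.getElem_idxOf _)
      simp [List.getD_eq_getElem?_getD, h2]
    have hz : (pd (rot V j)).count infE = 0 :=
      count_pd_zero _ (by rw [head_rot V j hlt]; exact hjv)
    omega
  · have hje : j = V.length := by omega
    rw [hje] at htele ⊢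
    rw [rot_full] at htele
    omega
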